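/- Let S1, S2, V1, V2, X1, X2, X3, W, Y be discrete random variables with joint distribution factorizing as p(s1,s2,w) p(v1) p(x1|s1,v1) p(v2) p(x2|s2,v2) p(x3|v1,v2) p(y|x1,x2,x3). Then H(S1, V1, X1, X3 | S2, V2, X2, W, Y) − H(V1, X1, X3 | S1, V2) = H(S1 | S2, W) − I(X1, X3; Y | S2, V2, X2, W). -/
import Mathlib


open scoped BigOperators

set_option synthInstance.maxSize 8192

noncomputable section

/-- Probability that the random variable `X` equals `x`, under pmf `p` on finite `Ω`. -/
def prEq {Ω α : Type*} [Fintype Ω] [DecidableEq α] (p : Ω → ℝ) (X : Ω → α) (x : α) : ℝ :=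
  ∑ ω : Ω, if X ω = x then p ω else 0

/-- Shannon entropy (base 2) of a discrete random variable. -/
def entH {Ω α : Type*} [Fintype Ω] [Fintype α] [DecidableEq α] (p : Ω → ℝ) (X : Ω → α) : ℝ :=
  -∑ x : α, prEq p X x * Real.logb 2 (prEq p X x)

/-- Conditional entropy `H(X | Y)`. -/
def condH {Ω α β : Type*} [Fintype Ω] [Fintype α] [DecidableEq α] [Fintype β] [DecidableEq β]
    (p : Ω → ℝ) (X : Ω → α) (Y : Ω → β) : ℝ :=
  entH p (fun ω => (X ω, Y ω)) - entH p Y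

/-- Conditional mutual information `I(X ; Y | Z)`. -/
def condMI {Ω α β γ : Type*} [Fintype Ω] [Fintype α] [DecidableEq α] [Fintype β] [DecidableEq β]
    [Fintype γ] [DecidableEq γ] (p : Ω → ℝ) (X : Ω → α) (Y : Ω → β) (Z : Ω → γ) : ℝ :=
  condH p X Z + condH p Y Z - condH p (fun ω => (X ω, Y ω)) Z

/-- (Unconditional) mutual information `I(X ; Y)`. -/
def mi2 {Ω α β : Type*} [Fintype Ω] [Fintype α] [DecidableEq α] [Fintype β] [DecidableEq β]
    (p : Ω → ℝ) (X : Ω → α) (Y : Ω → β) : ℝ :=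
  entH p X + entH p Y - entH p (fun ω => (X ω, Y ω))

/-- `p` is a probability mass function on `Ω`. -/
def IsPMF {Ω : Type*} [Fintype Ω] (p : Ω → ℝ) : Prop :=
  (∀ ω, 0 ≤ p ω) ∧ ∑ ω : Ω, p ω = 1

/-- The Markov chain `A ↔ B ↔ C`: `A` and `C` are conditionally independent given `B`. -/
def MarkovChain {Ω α β γ : Type*} [Fintype Ω] [DecidableEq α] [DecidableEq β] [DecidableEq γ]
    (p : Ω → ℝ) (A : Ω → α) (B : Ω → β) (C : Ω → γ) : Prop :=
  ∀ a b c, prEq p (fun ω => (A ω, B ω, C ω)) (a, b, c) * prEq p B b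
    = prEq p (fun ω => (A ω, B ω)) (a, b) * prEq p (fun ω => (B ω, C ω)) (b, c)

/-- Hirschfeld–Gebelein–Rényi maximal correlation of `X` and `Y`
(with the convention `sSup ∅ = 0` in `ℝ`). -/
def maxCorr {Ω α β : Type*} [Fintype Ω] (p : Ω → ℝ) (X : Ω → α) (Y : Ω → β) : ℝ :=
  sSup {r : ℝ | ∃ f : α → ℝ, ∃ g : β → ℝ,
    (∑ ω : Ω, p ω * f (X ω)) = 0 ∧ (∑ ω : Ω, p ω * g (Y ω)) = 0 ∧
    (∑ ω : Ω, p ω * (f (X ω)) ^ 2) = 1 ∧ (∑ ω : Ω, p ω * (g (Y ω)) ^ 2) = 1 ∧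
    r = ∑ ω : Ω, p ω * f (X ω) * g (Y ω)}

lemma sum_ite_push {ι : Type*} [Fintype ι] (c : Prop) [Decidable c] (f : ι → ℝ) :
    ∑ i : ι, (if c then f i else 0) = if c then ∑ i : ι, f i else 0 := by
  split <;> simp

lemma sum_comm3 {α β γ : Type*} [Fintype α] [Fintype β] [Fintype γ]
    (f : α → β → γ → ℝ) :
    ∑ a : α, ∑ b : β, ∑ c : γ, f a b c = ∑ c : γ, ∑ a : α, ∑ b : β, f a b c :=
  (Finset.sum_congr rfl fun _ _ => Finset.sum_comm).trans Finset.sum_comm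

lemma prEq_nonneg {Ω α : Type*} [Fintype Ω] [DecidableEq α] {p : Ω → ℝ}
    (hp : ∀ ω, 0 ≤ p ω) (X : Ω → α) (x : α) : 0 ≤ prEq p X x :=
  Finset.sum_nonneg fun ω _ => by by_cases h : X ω = x <;> simp [h, hp ω]

lemma prEq_comp {Ω α β : Type*} [Fintype Ω] [Fintype α] [DecidableEq α] [DecidableEq β]
    (p : Ω → ℝ) (X : Ω → α) (F : α → β) (y : β) :
    prEq p (fun ω => F (X ω)) y = ∑ x : α, if F x = y then prEq p X x else 0 := by
  calc prEq p (fun ω => F (X ω)) y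
      = ∑ ω, if F (X ω) = y then p ω else 0 := rfl
    _ = ∑ ω, ∑ x, if X ω = x then (if F x = y then p ω else 0) else 0 := by
        refine Finset.sum_congr rfl fun ω _ => ?_
        rw [Finset.sum_ite_eq Finset.univ (X ω) (fun x => if F x = y then p ω else 0)]
        simp
    _ = ∑ x, ∑ ω, if X ω = x then (if F x = y then p ω else 0) else 0 := Finset.sum_comm
    _ = ∑ x : α, if F x = y then prEq p X x else 0 := by
        refine Finset.sum_congr rfl fun x _ => ?_
        by_cases h : F x = y <;> simp [h, prEq]

lemma entH_comp {Ω α β : Type*} [Fintype Ω] [Fintype α] [DecidableEq α] [Fintype β] [DecidableEq β]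
    (p : Ω → ℝ) (X : Ω → α) (e : α → β) (he : Function.Injective e) :
    entH p (fun ω => e (X ω)) = entH p X := by
  unfold entH
  congr 1
  have h1 : ∀ x : α, prEq p (fun ω => e (X ω)) (e x) = prEq p X x := by
    intro x
    refine Finset.sum_congr rfl fun ω _ => ?_
    simp [he.eq_iff]
  have h0 : ∀ b : β, b ∉ Finset.univ.image e → prEq p (fun ω => e (X ω)) b = 0 := by
    intro b hb
    apply Finset.sum_eq_zero
    intro ω _
    rw [if_neg]
    intro hcon
    exact hb (Finset.mem_image.2 ⟨X ω, Finset.mem_univ _, hcon⟩)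
  calc ∑ b : β, prEq p (fun ω => e (X ω)) b * Real.logb 2 (prEq p (fun ω => e (X ω)) b)
      = ∑ b ∈ Finset.univ.image e,
          prEq p (fun ω => e (X ω)) b * Real.logb 2 (prEq p (fun ω => e (X ω)) b) := by
        refine (Finset.sum_subset (Finset.subset_univ _) ?_).symm
        intro b _ hb
        rw [h0 b hb]; simp
    _ = ∑ x : α, prEq p (fun ω => e (X ω)) (e x)
          * Real.logb 2 (prEq p (fun ω => e (X ω)) (e x)) := by
        rw [Finset.sum_image (fun x _ y _ h => he h)]
    _ = ∑ x : α, prEq p X x * Real.logb 2 (prEq p X x) := by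
        simp_rw [h1]

lemma prEq_marg_mid {Ω α β γ : Type*} [Fintype Ω] [Fintype β]
    [DecidableEq α] [DecidableEq β] [DecidableEq γ]
    (p : Ω → ℝ) (A : Ω → α) (B : Ω → β) (C : Ω → γ) (a : α) (c : γ) :
    prEq p (fun ω => (A ω, C ω)) (a, c)
      = ∑ b : β, prEq p (fun ω => (A ω, B ω, C ω)) (a, b, c) := by
  unfold prEq
  rw [Finset.sum_comm]
  refine Finset.sum_congr rfl fun ω _ => ?_
  by_cases hA : A ω = a <;> by_cases hC : C ω = c <;>
    simp [hA, hC, Prod.ext_iff, Finset.sum_ite_eq]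

lemma prEq_marg_fst {Ω α β γ : Type*} [Fintype Ω] [Fintype α]
    [DecidableEq α] [DecidableEq β] [DecidableEq γ]
    (p : Ω → ℝ) (A : Ω → α) (B : Ω → β) (C : Ω → γ) (b : β) (c : γ) :
    prEq p (fun ω => (B ω, C ω)) (b, c)
      = ∑ a : α, prEq p (fun ω => (A ω, B ω, C ω)) (a, b, c) := by
  unfold prEq
  rw [Finset.sum_comm]
  refine Finset.sum_congr rfl fun ω _ => ?_
  by_cases hB : B ω = b <;> by_cases hC : C ω = c <;>
    simp [hB, hC, Prod.ext_iff, Finset.sum_ite_eq]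

lemma prEq_marg2 {Ω α γ : Type*} [Fintype Ω] [Fintype α]
    [DecidableEq α] [DecidableEq γ]
    (p : Ω → ℝ) (A : Ω → α) (C : Ω → γ) (c : γ) :
    prEq p C c = ∑ a : α, prEq p (fun ω => (A ω, C ω)) (a, c) := by
  unfold prEq
  rw [Finset.sum_comm]
  refine Finset.sum_congr rfl fun ω _ => ?_
  by_cases hC : C ω = c <;> simp [hC, Prod.ext_iff, Finset.sum_ite_eq]

lemma MC_entH {Ω α β γ : Type*} [Fintype Ω] [Fintype α] [DecidableEq α]
    [Fintype β] [DecidableEq β] [Fintype γ] [DecidableEq γ]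
    (p : Ω → ℝ) (hp0 : ∀ ω, 0 ≤ p ω)
    (A : Ω → α) (B : Ω → β) (C : Ω → γ)
    (h : ∀ a b c, prEq p (fun ω => (A ω, B ω, C ω)) (a, b, c) * prEq p C c
      = prEq p (fun ω => (A ω, C ω)) (a, c) * prEq p (fun ω => (B ω, C ω)) (b, c)) :
    entH p (fun ω => (A ω, B ω, C ω)) + entH p C
      = entH p (fun ω => (A ω, C ω)) + entH p (fun ω => (B ω, C ω)) := by
  have hq3 : ∀ a b c, 0 ≤ prEq p (fun ω => (A ω, B ω, C ω)) (a, b, c) :=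
    fun a b c => prEq_nonneg hp0 _ _
  have hAC : ∀ a c, prEq p (fun ω => (A ω, C ω)) (a, c)
      = ∑ b : β, prEq p (fun ω => (A ω, B ω, C ω)) (a, b, c) :=
    fun a c => prEq_marg_mid p A B C a c
  have hBC : ∀ b c, prEq p (fun ω => (B ω, C ω)) (b, c)
      = ∑ a : α, prEq p (fun ω => (A ω, B ω, C ω)) (a, b, c) :=
    fun b c => prEq_marg_fst p A B C b c
  have hC : ∀ c, prEq p C c
      = ∑ a : α, ∑ b : β, prEq p (fun ω => (A ω, B ω, C ω)) (a, b, c) := by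
    intro c
    rw [prEq_marg2 p A C c]
    exact Finset.sum_congr rfl fun a _ => hAC a c
  have key : ∀ a b c,
      prEq p (fun ω => (A ω, B ω, C ω)) (a,b,c)
          * Real.logb 2 (prEq p (fun ω => (A ω, B ω, C ω)) (a,b,c))
        + prEq p (fun ω => (A ω, B ω, C ω)) (a,b,c) * Real.logb 2 (prEq p C c)
      = prEq p (fun ω => (A ω, B ω, C ω)) (a,b,c)
          * Real.logb 2 (prEq p (fun ω => (A ω, C ω)) (a,c))
        + prEq p (fun ω => (A ω, B ω, C ω)) (a,b,c)
          * Real.logb 2 (prEq p (fun ω => (B ω, C ω)) (b,c)) := by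
    intro a b c
    rcases (hq3 a b c).lt_or_eq with hpos | hzero
    · have hac : 0 < prEq p (fun ω => (A ω, C ω)) (a, c) := by
        refine lt_of_lt_of_le hpos ?_
        rw [hAC]
        exact Finset.single_le_sum (fun b' _ => hq3 a b' c) (Finset.mem_univ b)
      have hbc : 0 < prEq p (fun ω => (B ω, C ω)) (b, c) := by
        refine lt_of_lt_of_le hpos ?_
        rw [hBC]
        exact Finset.single_le_sum (fun a' _ => hq3 a' b c) (Finset.mem_univ a)
      have hc : 0 < prEq p C c := by
        refine lt_of_lt_of_le hpos ?_
        rw [hC]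
        exact le_trans
          (Finset.single_le_sum (fun b' _ => hq3 a b' c) (Finset.mem_univ b))
          (Finset.single_le_sum
            (fun a' _ => Finset.sum_nonneg fun b' _ => hq3 a' b' c) (Finset.mem_univ a))
      have hlog := congrArg (Real.logb 2) (h a b c)
      rw [Real.logb_mul (ne_of_gt hpos) (ne_of_gt hc),
        Real.logb_mul (ne_of_gt hac) (ne_of_gt hbc)] at hlog
      linear_combination (prEq p (fun ω => (A ω, B ω, C ω)) (a,b,c)) * hlog
    · rw [← hzero]; ring
  have S : (∑ a : α, ∑ b : β, ∑ c : γ,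
      (prEq p (fun ω => (A ω, B ω, C ω)) (a,b,c)
          * Real.logb 2 (prEq p (fun ω => (A ω, B ω, C ω)) (a,b,c))
        + prEq p (fun ω => (A ω, B ω, C ω)) (a,b,c) * Real.logb 2 (prEq p C c)))
      = ∑ a : α, ∑ b : β, ∑ c : γ,
      (prEq p (fun ω => (A ω, B ω, C ω)) (a,b,c)
          * Real.logb 2 (prEq p (fun ω => (A ω, C ω)) (a,c))
        + prEq p (fun ω => (A ω, B ω, C ω)) (a,b,c)
          * Real.logb 2 (prEq p (fun ω => (B ω, C ω)) (b,c))) :=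
    Finset.sum_congr rfl fun a _ => Finset.sum_congr rfl fun b _ =>
      Finset.sum_congr rfl fun c _ => key a b c
  simp only [Finset.sum_add_distrib] at S
  have t1 : (∑ a : α, ∑ b : β, ∑ c : γ,
      prEq p (fun ω => (A ω, B ω, C ω)) (a,b,c) * Real.logb 2 (prEq p C c))
      = ∑ c : γ, prEq p C c * Real.logb 2 (prEq p C c) := by
    rw [sum_comm3]
    refine Finset.sum_congr rfl fun c _ => ?_
    simp only [← Finset.sum_mul]
    rw [← hC]
  have t2 : (∑ a : α, ∑ b : β, ∑ c : γ,
      prEq p (fun ω => (A ω, B ω, C ω)) (a,b,c)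
        * Real.logb 2 (prEq p (fun ω => (A ω, C ω)) (a,c)))
      = ∑ a : α, ∑ c : γ, prEq p (fun ω => (A ω, C ω)) (a,c)
          * Real.logb 2 (prEq p (fun ω => (A ω, C ω)) (a,c)) := by
    refine Finset.sum_congr rfl fun a _ => ?_
    rw [Finset.sum_comm]
    refine Finset.sum_congr rfl fun c _ => ?_
    simp only [← Finset.sum_mul]
    rw [← hAC]
  have t3 : (∑ a : α, ∑ b : β, ∑ c : γ,
      prEq p (fun ω => (A ω, B ω, C ω)) (a,b,c)
        * Real.logb 2 (prEq p (fun ω => (B ω, C ω)) (b,c)))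
      = ∑ b : β, ∑ c : γ, prEq p (fun ω => (B ω, C ω)) (b,c)
          * Real.logb 2 (prEq p (fun ω => (B ω, C ω)) (b,c)) := by
    rw [Finset.sum_comm]
    refine Finset.sum_congr rfl fun b _ => ?_
    rw [Finset.sum_comm]
    refine Finset.sum_congr rfl fun c _ => ?_
    simp only [← Finset.sum_mul]
    rw [← hBC]
  have e3 : entH p (fun ω => (A ω, B ω, C ω))
      = -∑ a : α, ∑ b : β, ∑ c : γ,
        prEq p (fun ω => (A ω, B ω, C ω)) (a,b,c)
          * Real.logb 2 (prEq p (fun ω => (A ω, B ω, C ω)) (a,b,c)) := by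
    unfold entH
    simp only [Fintype.sum_prod_type]
  have eAC : entH p (fun ω => (A ω, C ω))
      = -∑ a : α, ∑ c : γ, prEq p (fun ω => (A ω, C ω)) (a,c)
          * Real.logb 2 (prEq p (fun ω => (A ω, C ω)) (a,c)) := by
    unfold entH
    simp only [Fintype.sum_prod_type]
  have eBC : entH p (fun ω => (B ω, C ω))
      = -∑ b : β, ∑ c : γ, prEq p (fun ω => (B ω, C ω)) (b,c)
          * Real.logb 2 (prEq p (fun ω => (B ω, C ω)) (b,c)) := by
    unfold entH
    simp only [Fintype.sum_prod_type]
  have eC : entH p C = -∑ c : γ, prEq p C c * Real.logb 2 (prEq p C c) := rfl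
  rw [e3, eAC, eBC, eC]
  linarith [S, t1, t2, t3]

set_option maxHeartbeats 1000000 in
theorem stmt3 {Ω S1t S2t Wt V1t V2t X1t X2t X3t Yt : Type*} [Fintype Ω]
    [Fintype S1t] [DecidableEq S1t] [Fintype S2t] [DecidableEq S2t]
    [Fintype Wt] [DecidableEq Wt] [Fintype V1t] [DecidableEq V1t]
    [Fintype V2t] [DecidableEq V2t] [Fintype X1t] [DecidableEq X1t]
    [Fintype X2t] [DecidableEq X2t] [Fintype X3t] [DecidableEq X3t]
    [Fintype Yt] [DecidableEq Yt]
    (p : Ω → ℝ) (hp : IsPMF p)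
    (S1 : Ω → S1t) (S2 : Ω → S2t) (W : Ω → Wt) (V1 : Ω → V1t) (V2 : Ω → V2t)
    (X1 : Ω → X1t) (X2 : Ω → X2t) (X3 : Ω → X3t) (Y : Ω → Yt)
    (pS : S1t → S2t → Wt → ℝ) (pV1 : V1t → ℝ) (pX1 : X1t → S1t → V1t → ℝ)
    (pV2 : V2t → ℝ) (pX2 : X2t → S2t → V2t → ℝ) (pX3 : X3t → V1t → V2t → ℝ)
    (pY : Yt → X1t → X2t → X3t → ℝ)
    (hS0 : ∀ s1 s2 w, 0 ≤ pS s1 s2 w)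
    (hS1 : ∑ s1 : S1t, ∑ s2 : S2t, ∑ w : Wt, pS s1 s2 w = 1)
    (hV10 : ∀ v1, 0 ≤ pV1 v1) (hV11 : ∑ v1 : V1t, pV1 v1 = 1)
    (hX10 : ∀ x1 s1 v1, 0 ≤ pX1 x1 s1 v1)
    (hX11 : ∀ s1 v1, ∑ x1 : X1t, pX1 x1 s1 v1 = 1)
    (hV20 : ∀ v2, 0 ≤ pV2 v2) (hV21 : ∑ v2 : V2t, pV2 v2 = 1)
    (hX20 : ∀ x2 s2 v2, 0 ≤ pX2 x2 s2 v2)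
    (hX21 : ∀ s2 v2, ∑ x2 : X2t, pX2 x2 s2 v2 = 1)
    (hX30 : ∀ x3 v1 v2, 0 ≤ pX3 x3 v1 v2)
    (hX31 : ∀ v1 v2, ∑ x3 : X3t, pX3 x3 v1 v2 = 1)
    (hY0 : ∀ y x1 x2 x3, 0 ≤ pY y x1 x2 x3)
    (hY1 : ∀ x1 x2 x3, ∑ y : Yt, pY y x1 x2 x3 = 1)
    (hfac : ∀ s1 s2 w v1 v2 x1 x2 x3 y,
      prEq p (fun ω => (S1 ω, S2 ω, W ω, V1 ω, V2 ω, X1 ω, X2 ω, X3 ω, Y ω))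
          (s1, s2, w, v1, v2, x1, x2, x3, y)
        = pS s1 s2 w * pV1 v1 * pX1 x1 s1 v1 * pV2 v2 * pX2 x2 s2 v2
            * pX3 x3 v1 v2 * pY y x1 x2 x3) :
    condH p (fun ω => (S1 ω, V1 ω, X1 ω, X3 ω))
        (fun ω => (S2 ω, V2 ω, X2 ω, W ω, Y ω))
      - condH p (fun ω => (V1 ω, X1 ω, X3 ω)) (fun ω => (S1 ω, V2 ω))
    = condH p S1 (fun ω => (S2 ω, W ω))
      - condMI p (fun ω => (X1 ω, X3 ω)) Y (fun ω => (S2 ω, V2 ω, X2 ω, W ω)) := by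
  have hp0 : ∀ ω, 0 ≤ p ω := hp.1
  -- marginals of the joint distribution
  have m1 : ∀ s1 v1 y s2 v2 x2 w x1 x3,
      prEq p (fun ω => ((S1 ω, V1 ω), Y ω, (S2 ω, V2 ω, X2 ω, W ω, X1 ω, X3 ω)))
        ((s1, v1), y, (s2, v2, x2, w, x1, x3))
      = pS s1 s2 w * pV1 v1 * pX1 x1 s1 v1 * pV2 v2 * pX2 x2 s2 v2
          * pX3 x3 v1 v2 * pY y x1 x2 x3 := by
    intro s1 v1 y s2 v2 x2 w x1 x3
    refine Eq.trans (prEq_comp p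
      (fun ω => (S1 ω, S2 ω, W ω, V1 ω, V2 ω, X1 ω, X2 ω, X3 ω, Y ω))
      (fun t => ((t.1, t.2.2.2.1), t.2.2.2.2.2.2.2.2,
        (t.2.1, t.2.2.2.2.1, t.2.2.2.2.2.2.1, t.2.2.1, t.2.2.2.2.2.1, t.2.2.2.2.2.2.2.1)))
      ((s1, v1), y, (s2, v2, x2, w, x1, x3))) ?_
    simp only [Fintype.sum_prod_type, hfac, Prod.mk.injEq, ite_and, sum_ite_push,
      Finset.sum_ite_eq', Finset.mem_univ, if_true, Finset.sum_const_zero]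
  have m2 : ∀ s2 v2 x2 w x1 x3,
      prEq p (fun ω => (S2 ω, V2 ω, X2 ω, W ω, X1 ω, X3 ω)) (s2, v2, x2, w, x1, x3)
      = pV2 v2 * pX2 x2 s2 v2 *
          (∑ s1 : S1t, ∑ v1 : V1t, pS s1 s2 w * pV1 v1 * pX1 x1 s1 v1 * pX3 x3 v1 v2) := by
    intro s2 v2 x2 w x1 x3
    refine Eq.trans (prEq_comp p
      (fun ω => (S1 ω, S2 ω, W ω, V1 ω, V2 ω, X1 ω, X2 ω, X3 ω, Y ω))
      (fun t => (t.2.1, t.2.2.2.2.1, t.2.2.2.2.2.2.1, t.2.2.1, t.2.2.2.2.2.1, t.2.2.2.2.2.2.2.1))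
      (s2, v2, x2, w, x1, x3)) ?_
    simp only [Fintype.sum_prod_type, hfac, Prod.mk.injEq, ite_and, sum_ite_push,
      Finset.sum_ite_eq', Finset.mem_univ, if_true, Finset.sum_const_zero]
    simp only [← Finset.mul_sum, ← Finset.sum_mul, hY1, hX31, hX21, hX11, hV21, hV11,
      mul_one, one_mul]
    rw [Finset.mul_sum]
    refine Finset.sum_congr rfl fun s1 _ => ?_
    rw [Finset.mul_sum]
    refine Finset.sum_congr rfl fun v1 _ => by ring
  have m3 : ∀ s1 v1 s2 v2 x2 w x1 x3,
      prEq p (fun ω => ((S1 ω, V1 ω), (S2 ω, V2 ω, X2 ω, W ω, X1 ω, X3 ω)))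
        ((s1, v1), (s2, v2, x2, w, x1, x3))
      = pS s1 s2 w * pV1 v1 * pX1 x1 s1 v1 * pV2 v2 * pX2 x2 s2 v2 * pX3 x3 v1 v2 := by
    intro s1 v1 s2 v2 x2 w x1 x3
    refine Eq.trans (prEq_comp p
      (fun ω => (S1 ω, S2 ω, W ω, V1 ω, V2 ω, X1 ω, X2 ω, X3 ω, Y ω))
      (fun t => ((t.1, t.2.2.2.1),
        (t.2.1, t.2.2.2.2.1, t.2.2.2.2.2.2.1, t.2.2.1, t.2.2.2.2.2.1, t.2.2.2.2.2.2.2.1)))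
      ((s1, v1), (s2, v2, x2, w, x1, x3))) ?_
    simp only [Fintype.sum_prod_type, hfac, Prod.mk.injEq, ite_and, sum_ite_push,
      Finset.sum_ite_eq', Finset.mem_univ, if_true, Finset.sum_const_zero]
    simp only [← Finset.mul_sum, ← Finset.sum_mul, hY1, hX31, hX21, hX11, hV21, hV11,
      mul_one, one_mul]
  have m4 : ∀ y s2 v2 x2 w x1 x3,
      prEq p (fun ω => (Y ω, (S2 ω, V2 ω, X2 ω, W ω, X1 ω, X3 ω))) (y, (s2, v2, x2, w, x1, x3))
      = pV2 v2 * pX2 x2 s2 v2 *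
          (∑ s1 : S1t, ∑ v1 : V1t, pS s1 s2 w * pV1 v1 * pX1 x1 s1 v1 * pX3 x3 v1 v2)
          * pY y x1 x2 x3 := by
    intro y s2 v2 x2 w x1 x3
    refine Eq.trans (prEq_comp p
      (fun ω => (S1 ω, S2 ω, W ω, V1 ω, V2 ω, X1 ω, X2 ω, X3 ω, Y ω))
      (fun t => (t.2.2.2.2.2.2.2.2,
        (t.2.1, t.2.2.2.2.1, t.2.2.2.2.2.2.1, t.2.2.1, t.2.2.2.2.2.1, t.2.2.2.2.2.2.2.1)))
      (y, (s2, v2, x2, w, x1, x3))) ?_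
    simp only [Fintype.sum_prod_type, hfac, Prod.mk.injEq, ite_and, sum_ite_push,
      Finset.sum_ite_eq', Finset.mem_univ, if_true, Finset.sum_const_zero]
    simp only [← Finset.mul_sum, ← Finset.sum_mul, hY1, hX31, hX21, hX11, hV21, hV11,
      mul_one, one_mul]
    simp only [Finset.sum_mul, Finset.mul_sum]
    refine Finset.sum_congr rfl fun s1 _ => Finset.sum_congr rfl fun v1 _ => by ring
  have m5 : ∀ s1 v2 x2 s2 w,
      prEq p (fun ω => (S1 ω, (V2 ω, X2 ω), (S2 ω, W ω))) (s1, (v2, x2), (s2, w))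
      = pS s1 s2 w * pV2 v2 * pX2 x2 s2 v2 := by
    intro s1 v2 x2 s2 w
    refine Eq.trans (prEq_comp p
      (fun ω => (S1 ω, S2 ω, W ω, V1 ω, V2 ω, X1 ω, X2 ω, X3 ω, Y ω))
      (fun t => (t.1, (t.2.2.2.2.1, t.2.2.2.2.2.2.1), (t.2.1, t.2.2.1)))
      (s1, (v2, x2), (s2, w))) ?_
    simp only [Fintype.sum_prod_type, hfac, Prod.mk.injEq, ite_and, sum_ite_push,
      Finset.sum_ite_eq', Finset.mem_univ, if_true, Finset.sum_const_zero]
    simp only [← Finset.mul_sum, ← Finset.sum_mul, hY1, hX31, hX21, hX11, hV21, hV11,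
      mul_one, one_mul]
  have m6 : ∀ s2 w, prEq p (fun ω => (S2 ω, W ω)) (s2, w) = ∑ s1 : S1t, pS s1 s2 w := by
    intro s2 w
    refine Eq.trans (prEq_comp p
      (fun ω => (S1 ω, S2 ω, W ω, V1 ω, V2 ω, X1 ω, X2 ω, X3 ω, Y ω))
      (fun t => (t.2.1, t.2.2.1)) (s2, w)) ?_
    simp only [Fintype.sum_prod_type, hfac, Prod.mk.injEq, ite_and, sum_ite_push,
      Finset.sum_ite_eq', Finset.mem_univ, if_true, Finset.sum_const_zero]
    simp only [← Finset.mul_sum, ← Finset.sum_mul, hY1, hX31, hX21, hX11, hV21, hV11,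
      mul_one, one_mul]
  have m7 : ∀ s1 s2 w, prEq p (fun ω => (S1 ω, (S2 ω, W ω))) (s1, (s2, w)) = pS s1 s2 w := by
    intro s1 s2 w
    refine Eq.trans (prEq_comp p
      (fun ω => (S1 ω, S2 ω, W ω, V1 ω, V2 ω, X1 ω, X2 ω, X3 ω, Y ω))
      (fun t => (t.1, (t.2.1, t.2.2.1))) (s1, (s2, w))) ?_
    simp only [Fintype.sum_prod_type, hfac, Prod.mk.injEq, ite_and, sum_ite_push,
      Finset.sum_ite_eq', Finset.mem_univ, if_true, Finset.sum_const_zero]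
    simp only [← Finset.mul_sum, ← Finset.sum_mul, hY1, hX31, hX21, hX11, hV21, hV11,
      mul_one, one_mul]
  have m8 : ∀ v2 x2 s2 w,
      prEq p (fun ω => ((V2 ω, X2 ω), (S2 ω, W ω))) ((v2, x2), (s2, w))
      = (∑ s1 : S1t, pS s1 s2 w) * pV2 v2 * pX2 x2 s2 v2 := by
    intro v2 x2 s2 w
    refine Eq.trans (prEq_comp p
      (fun ω => (S1 ω, S2 ω, W ω, V1 ω, V2 ω, X1 ω, X2 ω, X3 ω, Y ω))
      (fun t => ((t.2.2.2.2.1, t.2.2.2.2.2.2.1), (t.2.1, t.2.2.1)))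
      ((v2, x2), (s2, w))) ?_
    simp only [Fintype.sum_prod_type, hfac, Prod.mk.injEq, ite_and, sum_ite_push,
      Finset.sum_ite_eq', Finset.mem_univ, if_true, Finset.sum_const_zero]
    simp only [← Finset.mul_sum, ← Finset.sum_mul, hY1, hX31, hX21, hX11, hV21, hV11,
      mul_one, one_mul]
  have m9 : ∀ v1 x1 x3 s2 x2 w s1 v2,
      prEq p (fun ω => ((V1 ω, X1 ω, X3 ω), (S2 ω, X2 ω, W ω), (S1 ω, V2 ω)))
        ((v1, x1, x3), (s2, x2, w), (s1, v2))
      = pS s1 s2 w * pV1 v1 * pX1 x1 s1 v1 * pV2 v2 * pX2 x2 s2 v2 * pX3 x3 v1 v2 := by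
    intro v1 x1 x3 s2 x2 w s1 v2
    refine Eq.trans (prEq_comp p
      (fun ω => (S1 ω, S2 ω, W ω, V1 ω, V2 ω, X1 ω, X2 ω, X3 ω, Y ω))
      (fun t => ((t.2.2.2.1, t.2.2.2.2.2.1, t.2.2.2.2.2.2.2.1),
        (t.2.1, t.2.2.2.2.2.2.1, t.2.2.1), (t.1, t.2.2.2.2.1)))
      ((v1, x1, x3), (s2, x2, w), (s1, v2))) ?_
    simp only [Fintype.sum_prod_type, hfac, Prod.mk.injEq, ite_and, sum_ite_push,
      Finset.sum_ite_eq', Finset.mem_univ, if_true, Finset.sum_const_zero]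
    simp only [← Finset.mul_sum, ← Finset.sum_mul, hY1, hX31, hX21, hX11, hV21, hV11,
      mul_one, one_mul]
  have m10 : ∀ s1 v2, prEq p (fun ω => (S1 ω, V2 ω)) (s1, v2)
      = (∑ s2 : S2t, ∑ w : Wt, pS s1 s2 w) * pV2 v2 := by
    intro s1 v2
    refine Eq.trans (prEq_comp p
      (fun ω => (S1 ω, S2 ω, W ω, V1 ω, V2 ω, X1 ω, X2 ω, X3 ω, Y ω))
      (fun t => (t.1, t.2.2.2.2.1)) (s1, v2)) ?_
    simp only [Fintype.sum_prod_type, hfac, Prod.mk.injEq, ite_and, sum_ite_push,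
      Finset.sum_ite_eq', Finset.mem_univ, if_true, Finset.sum_const_zero]
    simp only [← Finset.mul_sum, ← Finset.sum_mul, hY1, hX31, hX21, hX11, hV21, hV11,
      mul_one, one_mul]
  have m11 : ∀ v1 x1 x3 s1 v2,
      prEq p (fun ω => ((V1 ω, X1 ω, X3 ω), (S1 ω, V2 ω))) ((v1, x1, x3), (s1, v2))
      = (∑ s2 : S2t, ∑ w : Wt, pS s1 s2 w) * pV1 v1 * pX1 x1 s1 v1 * pV2 v2 * pX3 x3 v1 v2 := by
    intro v1 x1 x3 s1 v2
    refine Eq.trans (prEq_comp p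
      (fun ω => (S1 ω, S2 ω, W ω, V1 ω, V2 ω, X1 ω, X2 ω, X3 ω, Y ω))
      (fun t => ((t.2.2.2.1, t.2.2.2.2.2.1, t.2.2.2.2.2.2.2.1), (t.1, t.2.2.2.2.1)))
      ((v1, x1, x3), (s1, v2))) ?_
    simp only [Fintype.sum_prod_type, hfac, Prod.mk.injEq, ite_and, sum_ite_push,
      Finset.sum_ite_eq', Finset.mem_univ, if_true, Finset.sum_const_zero]
    simp only [← Finset.mul_sum, ← Finset.sum_mul, hY1, hX31, hX21, hX11, hV21, hV11,
      mul_one, one_mul]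
  have m12 : ∀ s2 x2 w s1 v2,
      prEq p (fun ω => ((S2 ω, X2 ω, W ω), (S1 ω, V2 ω))) ((s2, x2, w), (s1, v2))
      = pS s1 s2 w * pV2 v2 * pX2 x2 s2 v2 := by
    intro s2 x2 w s1 v2
    refine Eq.trans (prEq_comp p
      (fun ω => (S1 ω, S2 ω, W ω, V1 ω, V2 ω, X1 ω, X2 ω, X3 ω, Y ω))
      (fun t => ((t.2.1, t.2.2.2.2.2.2.1, t.2.2.1), (t.1, t.2.2.2.2.1)))
      ((s2, x2, w), (s1, v2))) ?_
    simp only [Fintype.sum_prod_type, hfac, Prod.mk.injEq, ite_and, sum_ite_push,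
      Finset.sum_ite_eq', Finset.mem_univ, if_true, Finset.sum_const_zero]
    simp only [← Finset.mul_sum, ← Finset.sum_mul, hY1, hX31, hX21, hX11, hV21, hV11,
      mul_one, one_mul]
  -- the three conditional-independence (Markov) identities
  have h1 : ∀ (a : S1t × V1t) (b : Yt) (c : S2t × V2t × X2t × Wt × X1t × X3t),
      prEq p (fun ω => ((S1 ω, V1 ω), Y ω, (S2 ω, V2 ω, X2 ω, W ω, X1 ω, X3 ω))) (a, b, c)
          * prEq p (fun ω => (S2 ω, V2 ω, X2 ω, W ω, X1 ω, X3 ω)) c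
        = prEq p (fun ω => ((S1 ω, V1 ω), (S2 ω, V2 ω, X2 ω, W ω, X1 ω, X3 ω))) (a, c)
          * prEq p (fun ω => (Y ω, (S2 ω, V2 ω, X2 ω, W ω, X1 ω, X3 ω))) (b, c) := by
    rintro ⟨s1, v1⟩ y ⟨s2, v2, x2, w, x1, x3⟩
    rw [m1, m2, m3, m4]
    ring
  have h2 : ∀ (a : S1t) (b : V2t × X2t) (c : S2t × Wt),
      prEq p (fun ω => (S1 ω, (V2 ω, X2 ω), (S2 ω, W ω))) (a, b, c)
          * prEq p (fun ω => (S2 ω, W ω)) c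
        = prEq p (fun ω => (S1 ω, (S2 ω, W ω))) (a, c)
          * prEq p (fun ω => ((V2 ω, X2 ω), (S2 ω, W ω))) (b, c) := by
    rintro s1 ⟨v2, x2⟩ ⟨s2, w⟩
    rw [m5, m6, m7, m8]
    ring
  have h3 : ∀ (a : V1t × X1t × X3t) (b : S2t × X2t × Wt) (c : S1t × V2t),
      prEq p (fun ω => ((V1 ω, X1 ω, X3 ω), (S2 ω, X2 ω, W ω), (S1 ω, V2 ω))) (a, b, c)
          * prEq p (fun ω => (S1 ω, V2 ω)) c
        = prEq p (fun ω => ((V1 ω, X1 ω, X3 ω), (S1 ω, V2 ω))) (a, c)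
          * prEq p (fun ω => ((S2 ω, X2 ω, W ω), (S1 ω, V2 ω))) (b, c) := by
    rintro ⟨v1, x1, x3⟩ ⟨s2, x2, w⟩ ⟨s1, v2⟩
    rw [m9, m10, m11, m12]
    ring
  have E1 : entH p (fun ω => ((S1 ω, V1 ω), Y ω, (S2 ω, V2 ω, X2 ω, W ω, X1 ω, X3 ω)))
        + entH p (fun ω => (S2 ω, V2 ω, X2 ω, W ω, X1 ω, X3 ω))
      = entH p (fun ω => ((S1 ω, V1 ω), (S2 ω, V2 ω, X2 ω, W ω, X1 ω, X3 ω)))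
        + entH p (fun ω => (Y ω, (S2 ω, V2 ω, X2 ω, W ω, X1 ω, X3 ω))) :=
    MC_entH p hp0 (fun ω => (S1 ω, V1 ω)) Y
      (fun ω => (S2 ω, V2 ω, X2 ω, W ω, X1 ω, X3 ω)) h1
  have E2 : entH p (fun ω => (S1 ω, (V2 ω, X2 ω), (S2 ω, W ω)))
        + entH p (fun ω => (S2 ω, W ω))
      = entH p (fun ω => (S1 ω, (S2 ω, W ω)))
        + entH p (fun ω => ((V2 ω, X2 ω), (S2 ω, W ω))) :=
    MC_entH p hp0 S1 (fun ω => (V2 ω, X2 ω)) (fun ω => (S2 ω, W ω)) h2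
  have E3 : entH p (fun ω => ((V1 ω, X1 ω, X3 ω), (S2 ω, X2 ω, W ω), (S1 ω, V2 ω)))
        + entH p (fun ω => (S1 ω, V2 ω))
      = entH p (fun ω => ((V1 ω, X1 ω, X3 ω), (S1 ω, V2 ω)))
        + entH p (fun ω => ((S2 ω, X2 ω, W ω), (S1 ω, V2 ω))) :=
    MC_entH p hp0 (fun ω => (V1 ω, X1 ω, X3 ω)) (fun ω => (S2 ω, X2 ω, W ω))
      (fun ω => (S1 ω, V2 ω)) h3
  -- relabelings
  have r1 : entH p (fun ω => ((S1 ω, V1 ω, X1 ω, X3 ω), (S2 ω, V2 ω, X2 ω, W ω, Y ω)))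
      = entH p (fun ω => ((S1 ω, V1 ω), Y ω, (S2 ω, V2 ω, X2 ω, W ω, X1 ω, X3 ω))) :=
    entH_comp p (fun ω => ((S1 ω, V1 ω), Y ω, (S2 ω, V2 ω, X2 ω, W ω, X1 ω, X3 ω)))
      (fun u => ((u.1.1, u.1.2, u.2.2.2.2.2.2.1, u.2.2.2.2.2.2.2),
        (u.2.2.1, u.2.2.2.1, u.2.2.2.2.1, u.2.2.2.2.2.1, u.2.1)))
      (by intro u v h; simp only [Prod.ext_iff] at h ⊢; tauto)
  have r2 : entH p (fun ω => (((X1 ω, X3 ω), Y ω), (S2 ω, V2 ω, X2 ω, W ω)))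
      = entH p (fun ω => (Y ω, (S2 ω, V2 ω, X2 ω, W ω, X1 ω, X3 ω))) :=
    entH_comp p (fun ω => (Y ω, (S2 ω, V2 ω, X2 ω, W ω, X1 ω, X3 ω)))
      (fun u => (((u.2.2.2.2.2.1, u.2.2.2.2.2.2), u.1), (u.2.1, u.2.2.1, u.2.2.2.1, u.2.2.2.2.1)))
      (by intro u v h; simp only [Prod.ext_iff] at h ⊢; tauto)
  have r3 : entH p (fun ω => ((X1 ω, X3 ω), (S2 ω, V2 ω, X2 ω, W ω)))
      = entH p (fun ω => (S2 ω, V2 ω, X2 ω, W ω, X1 ω, X3 ω)) :=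
    entH_comp p (fun ω => (S2 ω, V2 ω, X2 ω, W ω, X1 ω, X3 ω))
      (fun u => ((u.2.2.2.2.1, u.2.2.2.2.2), (u.1, u.2.1, u.2.2.1, u.2.2.2.1)))
      (by intro u v h; simp only [Prod.ext_iff] at h ⊢; tauto)
  have r4 : entH p (fun ω => ((S1 ω, V1 ω), (S2 ω, V2 ω, X2 ω, W ω, X1 ω, X3 ω)))
      = entH p (fun ω => ((V1 ω, X1 ω, X3 ω), (S2 ω, X2 ω, W ω), (S1 ω, V2 ω))) :=
    entH_comp p (fun ω => ((V1 ω, X1 ω, X3 ω), (S2 ω, X2 ω, W ω), (S1 ω, V2 ω)))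
      (fun u => ((u.2.2.1, u.1.1),
        (u.2.1.1, u.2.2.2, u.2.1.2.1, u.2.1.2.2, u.1.2.1, u.1.2.2)))
      (by intro u v h; simp only [Prod.ext_iff] at h ⊢; tauto)
  have r5 : entH p (fun ω => ((S2 ω, X2 ω, W ω), (S1 ω, V2 ω)))
      = entH p (fun ω => (S1 ω, (V2 ω, X2 ω), (S2 ω, W ω))) :=
    entH_comp p (fun ω => (S1 ω, (V2 ω, X2 ω), (S2 ω, W ω)))
      (fun u => ((u.2.2.1, u.2.1.2, u.2.2.2), (u.1, u.2.1.1)))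
      (by intro u v h; simp only [Prod.ext_iff] at h ⊢; tauto)
  have r6 : entH p (fun ω => (S2 ω, V2 ω, X2 ω, W ω))
      = entH p (fun ω => ((V2 ω, X2 ω), (S2 ω, W ω))) :=
    entH_comp p (fun ω => ((V2 ω, X2 ω), (S2 ω, W ω)))
      (fun u => (u.2.1, u.1.1, u.1.2, u.2.2))
      (by intro u v h; simp only [Prod.ext_iff] at h ⊢; tauto)
  have r8 : entH p (fun ω => (S2 ω, V2 ω, X2 ω, W ω, Y ω))
      = entH p (fun ω => (Y ω, (S2 ω, V2 ω, X2 ω, W ω))) :=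
    entH_comp p (fun ω => (Y ω, (S2 ω, V2 ω, X2 ω, W ω)))
      (fun u => (u.2.1, u.2.2.1, u.2.2.2.1, u.2.2.2.2, u.1))
      (by intro u v h; simp only [Prod.ext_iff] at h ⊢; tauto)
  simp only [condH, condMI]
  linarith [E1, E2, E3, r1, r2, r3, r4, r5, r6, r8]
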